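/- If for every training sample $i$ and every class $y$ one has $|\mathbb{1}[y_i = y] - \mathrm{logit}_y(F, X_i)| \leq \epsilon$, and the features and feature-gradients are uniformly bounded in norm by $B$, then the gradient of the empirical cross-entropy loss with respect to each classifier block $\theta_{y,s}$ has norm at most $\epsilon B$, and with respect to encoder weights $W_s$ has norm at most $k \epsilon B'$ where $B'$ bounds the norm of $\nabla_{W_s}\langle \theta_{y,s}, \varphi_s(W_s, X_i)\rangle$. In particular, as $\epsilon \to 0$ all gradients vanish regardless of the state of the encoders. -/

import Mathlib

open Real Finset
open scoped RealInnerProductSpace BigOperators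

/-- Empirical cross-entropy loss of logits `F i j` (sample `i`, class `j`) with labels `ylab`. -/
noncomputable def ceLoss {n k : ℕ} (F : Fin n → Fin k → ℝ) (ylab : Fin n → Fin k) : ℝ :=
  (1 / n : ℝ) * ∑ i, -Real.log (Real.exp (F i (ylab i)) / ∑ j, Real.exp (F i j))

lemma hasGradientAt_inner_right {X : Type*} [NormedAddCommGroup X] [InnerProductSpace ℝ X]
    [CompleteSpace X] (v x : X) : HasGradientAt (fun t : X => ⟪t, v⟫) v x := by
  have h : (fun t : X => ⟪t, v⟫) = fun t => (InnerProductSpace.toDual ℝ X v) t :=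
    funext fun t => by rw [InnerProductSpace.toDual_apply_apply, real_inner_comm]
  rw [hasGradientAt_iff_hasFDerivAt, h]
  exact (InnerProductSpace.toDual ℝ X v).hasFDerivAt

lemma HasGradientAt.add_const' {X : Type*} [NormedAddCommGroup X] [InnerProductSpace ℝ X]
    [CompleteSpace X] {f : X → ℝ} {g x : X} (h : HasGradientAt f g x) (c : ℝ) :
    HasGradientAt (fun z => f z + c) g x := by
  rw [hasGradientAt_iff_hasFDerivAt] at h ⊢
  exact h.add_const c

lemma HasGradientAt.const_add' {X : Type*} [NormedAddCommGroup X] [InnerProductSpace ℝ X]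
    [CompleteSpace X] {f : X → ℝ} {g x : X} (h : HasGradientAt f g x) (c : ℝ) :
    HasGradientAt (fun z => c + f z) g x := by
  rw [hasGradientAt_iff_hasFDerivAt] at h ⊢
  exact h.const_add c

lemma avg_norm_le {X : Type*} [SeminormedAddCommGroup X] [NormedSpace ℝ X] {n : ℕ}
    (hn : 0 < n) (a : Fin n → X) {C : ℝ} (h : ∀ i, ‖a i‖ ≤ C) :
    ‖(1 / n : ℝ) • ∑ i, a i‖ ≤ C := by
  have hn' : (0:ℝ) < n := by exact_mod_cast hn
  rw [norm_smul, Real.norm_eq_abs, abs_of_pos (by positivity)]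
  have h2 : ‖∑ i, a i‖ ≤ n * C := by
    calc ‖∑ i, a i‖ ≤ ∑ i, ‖a i‖ := norm_sum_le _ _
    _ ≤ ∑ _i : Fin n, C := Finset.sum_le_sum (fun i _ => h i)
    _ = n * C := by simp [Finset.sum_const, mul_comm]
  calc (1 / n : ℝ) * ‖∑ i, a i‖ ≤ (1 / n) * (n * C) :=
        mul_le_mul_of_nonneg_left h2 (by positivity)
    _ = C := by field_simp

lemma ce_hasGradientAt {X : Type*} [NormedAddCommGroup X] [InnerProductSpace ℝ X]
    [CompleteSpace X] {n k : ℕ} (hk : 0 < k) (ylab : Fin n → Fin k)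
    (F : X → Fin n → Fin k → ℝ) (d : Fin n → Fin k → X) (x : X)
    (hF : ∀ i j, HasGradientAt (fun z => F z i j) (d i j) x) :
    HasGradientAt (fun z => ceLoss (F z) ylab)
      ((1 / n : ℝ) • ∑ i, ∑ j,
        ((Real.exp (F x i j) / ∑ j', Real.exp (F x i j')) -
          (if ylab i = j then (1:ℝ) else 0)) • d i j) x := by
  haveI : Nonempty (Fin k) := ⟨⟨0, hk⟩⟩
  have hS : ∀ z i, 0 < ∑ j, Real.exp (F z i j) := fun z i =>
    Finset.sum_pos (fun j _ => Real.exp_pos _) Finset.univ_nonempty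
  have hrw : (fun z => ceLoss (F z) ylab) =
      fun z => (1 / n : ℝ) * ∑ i, (Real.log (∑ j, Real.exp (F z i j)) - F z i (ylab i)) := by
    funext z
    unfold ceLoss
    congr 1
    refine Finset.sum_congr rfl fun i _ => ?_
    rw [Real.log_div (Real.exp_ne_zero _) (hS z i).ne', Real.log_exp]
    ring
  rw [hasGradientAt_iff_hasFDerivAt, hrw]
  have hD : ∀ i j, HasFDerivAt (fun z => F z i j)
      (InnerProductSpace.toDual ℝ X (d i j)) x := fun i j => (hF i j).hasFDerivAt
  have hterm : ∀ i, HasFDerivAt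
      (fun z => Real.log (∑ j, Real.exp (F z i j)) - F z i (ylab i))
      ((∑ j, Real.exp (F x i j))⁻¹ •
          (∑ j, Real.exp (F x i j) • (InnerProductSpace.toDual ℝ X (d i j) : X →L[ℝ] ℝ)) -
        InnerProductSpace.toDual ℝ X (d i (ylab i))) x := fun i =>
    ((HasFDerivAt.fun_sum (fun j _ => (hD i j).exp)).log (hS x i).ne').sub (hD i (ylab i))
  have hmain := (HasFDerivAt.fun_sum (fun i (_ : i ∈ Finset.univ) => hterm i)).const_mul (1 / n : ℝ)
  convert hmain using 1
  · rfl
  rw [map_smul, map_sum]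
  congr 1
  refine Finset.sum_congr rfl fun i _ => ?_
  rw [map_sum, Finset.smul_sum]
  have h1 : (∑ j, (if ylab i = j then (1:ℝ) else 0) •
      (InnerProductSpace.toDual ℝ X (d i j) : X →L[ℝ] ℝ)) =
      InnerProductSpace.toDual ℝ X (d i (ylab i)) := by
    simp [ite_smul]
  calc (∑ j, (InnerProductSpace.toDual ℝ X
        (((Real.exp (F x i j) / ∑ j', Real.exp (F x i j')) -
          (if ylab i = j then (1:ℝ) else 0)) • d i j) : X →L[ℝ] ℝ))
      = ∑ j, ((Real.exp (F x i j) / ∑ j', Real.exp (F x i j')) •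
          (InnerProductSpace.toDual ℝ X (d i j) : X →L[ℝ] ℝ) -
          (if ylab i = j then (1:ℝ) else 0) •
          (InnerProductSpace.toDual ℝ X (d i j) : X →L[ℝ] ℝ)) := by
        refine Finset.sum_congr rfl fun j _ => ?_
        rw [map_smul, sub_smul]
    _ = _ := by
        rw [Finset.sum_sub_distrib, h1]
        congr 1
        refine Finset.sum_congr rfl fun j _ => ?_
        rw [smul_smul, div_eq_mul_inv, mul_comm]


theorem stmt_4
    {E1 E2 H1 H2 : Type*}
    [NormedAddCommGroup E1] [InnerProductSpace ℝ E1] [CompleteSpace E1]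
    [NormedAddCommGroup E2] [InnerProductSpace ℝ E2] [CompleteSpace E2]
    [NormedAddCommGroup H1] [InnerProductSpace ℝ H1] [CompleteSpace H1]
    [NormedAddCommGroup H2] [InnerProductSpace ℝ H2] [CompleteSpace H2]
    (n k : ℕ) (hn : 0 < n) (hk : 0 < k)
    (φ1 : H1 → Fin n → E1) (φ2 : H2 → Fin n → E2)
    (θ1 : Fin k → E1) (θ2 : Fin k → E2) (W1 : H1) (W2 : H2)
    (ylab : Fin n → Fin k) (ε B B' : ℝ)
    (hlogit : ∀ i y, |(if ylab i = y then (1 : ℝ) else 0) -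
        Real.exp (⟪θ1 y, φ1 W1 i⟫ + ⟪θ2 y, φ2 W2 i⟫) /
          ∑ j, Real.exp (⟪θ1 j, φ1 W1 i⟫ + ⟪θ2 j, φ2 W2 i⟫)| ≤ ε)
    (hB1 : ∀ i, ‖φ1 W1 i‖ ≤ B) (hB2 : ∀ i, ‖φ2 W2 i‖ ≤ B)
    (g1 : Fin n → Fin k → H1) (g2 : Fin n → Fin k → H2)
    (hg1 : ∀ i y, HasGradientAt (fun W => ⟪θ1 y, φ1 W i⟫) (g1 i y) W1)
    (hg2 : ∀ i y, HasGradientAt (fun W => ⟪θ2 y, φ2 W i⟫) (g2 i y) W2)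
    (hB'1 : ∀ i y, ‖g1 i y‖ ≤ B') (hB'2 : ∀ i y, ‖g2 i y‖ ≤ B') :
    -- gradients w.r.t. the classifier blocks are bounded by ε * B
    (∀ y G, HasGradientAt (fun t : E1 =>
        ceLoss (fun i j => ⟪Function.update θ1 y t j, φ1 W1 i⟫ + ⟪θ2 j, φ2 W2 i⟫) ylab)
        G (θ1 y) → ‖G‖ ≤ ε * B) ∧
    (∀ y G, HasGradientAt (fun t : E2 =>
        ceLoss (fun i j => ⟪θ1 j, φ1 W1 i⟫ + ⟪Function.update θ2 y t j, φ2 W2 i⟫) ylab)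
        G (θ2 y) → ‖G‖ ≤ ε * B) ∧
    -- gradients w.r.t. the encoder weights are bounded by k * ε * B'
    (∀ G, HasGradientAt (fun W : H1 =>
        ceLoss (fun i j => ⟪θ1 j, φ1 W i⟫ + ⟪θ2 j, φ2 W2 i⟫) ylab) G W1 →
      ‖G‖ ≤ k * ε * B') ∧
    (∀ G, HasGradientAt (fun W : H2 =>
        ceLoss (fun i j => ⟪θ1 j, φ1 W1 i⟫ + ⟪θ2 j, φ2 W i⟫) ylab) G W2 →
      ‖G‖ ≤ k * ε * B') := by
  have i0 : Fin n := ⟨0, hn⟩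
  have j0 : Fin k := ⟨0, hk⟩
  have hε : 0 ≤ ε := le_trans (abs_nonneg _) (hlogit i0 j0)
  have hB : 0 ≤ B := le_trans (norm_nonneg _) (hB1 i0)
  have hB' : 0 ≤ B' := le_trans (norm_nonneg _) (hB'1 i0 j0)
  have habs : ∀ i j, |Real.exp (⟪θ1 j, φ1 W1 i⟫ + ⟪θ2 j, φ2 W2 i⟫) /
      (∑ j', Real.exp (⟪θ1 j', φ1 W1 i⟫ + ⟪θ2 j', φ2 W2 i⟫)) -
      (if ylab i = j then (1:ℝ) else 0)| ≤ ε := fun i j => by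
    rw [abs_sub_comm]; exact hlogit i j
  refine ⟨?_, ?_, ?_, ?_⟩
  · -- θ1 block
    intro y G hG
    have hF : ∀ i j, HasGradientAt
        (fun t : E1 => ⟪Function.update θ1 y t j, φ1 W1 i⟫ + ⟪θ2 j, φ2 W2 i⟫)
        (if j = y then φ1 W1 i else 0) (θ1 y) := by
      intro i j
      by_cases h : j = y
      · subst h
        simp only [Function.update_self, if_pos rfl]
        exact (hasGradientAt_inner_right (φ1 W1 i) (θ1 j)).add_const' _
      · simp only [Function.update_of_ne h, if_neg h]
        exact hasGradientAt_const _ _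
    have hexp := ce_hasGradientAt hk ylab
      (fun t i j => ⟪Function.update θ1 y t j, φ1 W1 i⟫ + ⟪θ2 j, φ2 W2 i⟫)
      (fun i j => if j = y then φ1 W1 i else 0) (θ1 y) hF
    have hGe := hG.unique hexp
    rw [hGe]
    simp only [Function.update_eq_self, smul_ite, smul_zero, Finset.sum_ite_eq',
      Finset.mem_univ, if_true]
    refine avg_norm_le hn _ fun i => ?_
    rw [norm_smul, Real.norm_eq_abs]
    exact mul_le_mul (habs i y) (hB1 i) (norm_nonneg _) hε
  · -- θ2 block
    intro y G hG
    have hF : ∀ i j, HasGradientAt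
        (fun t : E2 => ⟪θ1 j, φ1 W1 i⟫ + ⟪Function.update θ2 y t j, φ2 W2 i⟫)
        (if j = y then φ2 W2 i else 0) (θ2 y) := by
      intro i j
      by_cases h : j = y
      · subst h
        simp only [Function.update_self, if_pos rfl]
        exact (hasGradientAt_inner_right (φ2 W2 i) (θ2 j)).const_add' _
      · simp only [Function.update_of_ne h, if_neg h]
        exact hasGradientAt_const _ _
    have hexp := ce_hasGradientAt hk ylab
      (fun t i j => ⟪θ1 j, φ1 W1 i⟫ + ⟪Function.update θ2 y t j, φ2 W2 i⟫)
      (fun i j => if j = y then φ2 W2 i else 0) (θ2 y) hF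
    have hGe := hG.unique hexp
    rw [hGe]
    simp only [Function.update_eq_self, smul_ite, smul_zero, Finset.sum_ite_eq',
      Finset.mem_univ, if_true]
    refine avg_norm_le hn _ fun i => ?_
    rw [norm_smul, Real.norm_eq_abs]
    exact mul_le_mul (habs i y) (hB2 i) (norm_nonneg _) hε
  · -- W1
    intro G hG
    have hF : ∀ i j, HasGradientAt
        (fun W : H1 => ⟪θ1 j, φ1 W i⟫ + ⟪θ2 j, φ2 W2 i⟫) (g1 i j) W1 :=
      fun i j => (hg1 i j).add_const' _
    have hexp := ce_hasGradientAt hk ylab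
      (fun W i j => ⟪θ1 j, φ1 W i⟫ + ⟪θ2 j, φ2 W2 i⟫) g1 W1 hF
    have hGe := hG.unique hexp
    rw [hGe]
    have : (k : ℝ) * ε * B' = k * (ε * B') := by ring
    rw [this]
    refine avg_norm_le hn _ fun i => ?_
    calc ‖∑ j, (Real.exp (⟪θ1 j, φ1 W1 i⟫ + ⟪θ2 j, φ2 W2 i⟫) /
            (∑ j', Real.exp (⟪θ1 j', φ1 W1 i⟫ + ⟪θ2 j', φ2 W2 i⟫)) -
            (if ylab i = j then (1:ℝ) else 0)) • g1 i j‖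
        ≤ ∑ j, ‖(Real.exp (⟪θ1 j, φ1 W1 i⟫ + ⟪θ2 j, φ2 W2 i⟫) /
            (∑ j', Real.exp (⟪θ1 j', φ1 W1 i⟫ + ⟪θ2 j', φ2 W2 i⟫)) -
            (if ylab i = j then (1:ℝ) else 0)) • g1 i j‖ := norm_sum_le _ _
      _ ≤ ∑ _j : Fin k, ε * B' := by
          refine Finset.sum_le_sum fun j _ => ?_
          rw [norm_smul, Real.norm_eq_abs]
          exact mul_le_mul (habs i j) (hB'1 i j) (norm_nonneg _) hε
      _ = k * (ε * B') := by simp [Finset.sum_const, mul_comm]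
  · -- W2
    intro G hG
    have hF : ∀ i j, HasGradientAt
        (fun W : H2 => ⟪θ1 j, φ1 W1 i⟫ + ⟪θ2 j, φ2 W i⟫) (g2 i j) W2 :=
      fun i j => (hg2 i j).const_add' _
    have hexp := ce_hasGradientAt hk ylab
      (fun W i j => ⟪θ1 j, φ1 W1 i⟫ + ⟪θ2 j, φ2 W i⟫) g2 W2 hF
    have hGe := hG.unique hexp
    rw [hGe]
    have : (k : ℝ) * ε * B' = k * (ε * B') := by ring
    rw [this]
    refine avg_norm_le hn _ fun i => ?_
    calc ‖∑ j, (Real.exp (⟪θ1 j, φ1 W1 i⟫ + ⟪θ2 j, φ2 W2 i⟫) /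
            (∑ j', Real.exp (⟪θ1 j', φ1 W1 i⟫ + ⟪θ2 j', φ2 W2 i⟫)) -
            (if ylab i = j then (1:ℝ) else 0)) • g2 i j‖
        ≤ ∑ j, ‖(Real.exp (⟪θ1 j, φ1 W1 i⟫ + ⟪θ2 j, φ2 W2 i⟫) /
            (∑ j', Real.exp (⟪θ1 j', φ1 W1 i⟫ + ⟪θ2 j', φ2 W2 i⟫)) -
            (if ylab i = j then (1:ℝ) else 0)) • g2 i j‖ := norm_sum_le _ _
      _ ≤ ∑ _j : Fin k, ε * B' := by
          refine Finset.sum_le_sum fun j _ => ?_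
          rw [norm_smul, Real.norm_eq_abs]
          exact mul_le_mul (habs i j) (hB'2 i j) (norm_nonneg _) hε
      _ = k * (ε * B') := by simp [Finset.sum_const, mul_comm]
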